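/- If A ⊆ F_2^r is a generic (r,r)-erasure correcting set, then the complement F_2^r \ A does not contain r linearly independent vectors; consequently |A| ≥ 2^{r−1}. -/

import Mathlib

open Matrix

/-- Hamming weight of a binary vector. -/
def wt {n : ℕ} (v : Fin n → ZMod 2) : ℕ :=
  (Finset.univ.filter (fun j => v j ≠ 0)).card

/-- `A` is a generic `(r,m)`-erasure reducing set. -/
def GenRed (r m : ℕ) (A : Set (Fin r → ZMod 2)) : Prop :=
  ∀ M : Matrix (Fin r) (Fin m) (ZMod 2), M.rank = m →
    ∃ a ∈ A, wt (Matrix.vecMul a M) = 1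

/-- `A` is a generic `(r,m)`-erasure correcting set. -/
def GenCor (r m : ℕ) (A : Set (Fin r → ZMod 2)) : Prop :=
  ∀ m', 1 ≤ m' → m' ≤ m → GenRed r m' A

theorem stmt_14 (r : ℕ) (hr : 1 ≤ r) (A : Set (Fin r → ZMod 2))
    (hA : GenCor r r A) :
    (¬ ∃ v : Fin r → (Fin r → ZMod 2),
        LinearIndependent (ZMod 2) v ∧ ∀ i, v i ∉ A) ∧
    2 ^ (r - 1) ≤ A.ncard := by
  have hx1 : ∀ x : ZMod 2, x ≠ 0 → x = 1 := by decide
  have part1 : ¬ ∃ v : Fin r → (Fin r → ZMod 2),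
      LinearIndependent (ZMod 2) v ∧ ∀ i, v i ∉ A := by
    rintro ⟨v, hli, hv⟩
    set N : Matrix (Fin r) (Fin r) (ZMod 2) := Matrix.of v with hN
    have hU : IsUnit N := Matrix.linearIndependent_rows_iff_isUnit.mp hli
    have hdet : IsUnit N.det := (Matrix.isUnit_iff_isUnit_det N).mp hU
    have hUinv : IsUnit N⁻¹ :=
      (Matrix.isUnit_iff_isUnit_det _).mpr (Matrix.isUnit_nonsing_inv_det N hdet)
    have hrank : (N⁻¹).rank = r := by
      rw [Matrix.rank_of_isUnit _ hUinv, Fintype.card_fin]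
    obtain ⟨a, haA, hw⟩ := hA r hr le_rfl N⁻¹ hrank
    set w := Matrix.vecMul a N⁻¹ with hwdef
    obtain ⟨j, hj⟩ := Finset.card_eq_one.mp hw
    have hwj : w = Pi.single j 1 := by
      funext k
      by_cases hk : k = j
      · subst hk
        have hk' : k ∈ Finset.univ.filter (fun j => w j ≠ 0) := by
          rw [hj]; exact Finset.mem_singleton_self k
        simp only [Finset.mem_filter] at hk'
        rw [Pi.single_eq_same]
        exact hx1 _ hk'.2
      · have hk' : k ∉ Finset.univ.filter (fun j => w j ≠ 0) := by
          rw [hj]; simpa using hk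
        simp only [Finset.mem_filter, Finset.mem_univ, true_and, not_not] at hk'
        rw [Pi.single_eq_of_ne hk, hk']
    have ha : a = v j := by
      have h1 : Matrix.vecMul w N = a := by
        rw [hwdef, Matrix.vecMul_vecMul, Matrix.nonsing_inv_mul N hdet, Matrix.vecMul_one]
      rw [hwj, Matrix.single_one_vecMul] at h1
      exact h1.symm
    exact hv j (ha ▸ haA)
  refine ⟨part1, ?_⟩
  classical
  set S : Set (Fin r → ZMod 2) := Aᶜ with hS
  have hfinV : Module.finrank (ZMod 2) (Fin r → ZMod 2) = r := by
    simp [Module.finrank_pi]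
  have hspan : Submodule.span (ZMod 2) S ≠ ⊤ := by
    intro htop
    obtain ⟨b, hbS, hbspan, hbli⟩ := exists_linearIndependent (ZMod 2) S
    have hbtop : Submodule.span (ZMod 2) b = ⊤ := by rw [hbspan, htop]
    haveI : Fintype b := Fintype.ofFinite b
    have hcard : Fintype.card b = r := by
      have := Module.finrank_eq_card_basis (Module.Basis.mk hbli (by rw [Subtype.range_coe, hbtop]))
      rw [hfinV] at this
      exact this.symm
    obtain ⟨e⟩ := Fintype.truncEquivFinOfCardEq hcard
    refine part1 ⟨fun i => (e.symm i : Fin r → ZMod 2), hbli.comp e.symm e.symm.injective, fun i => ?_⟩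
    have : ((e.symm i : Fin r → ZMod 2)) ∈ S := hbS (e.symm i).2
    simpa [hS] using this
  set W := Submodule.span (ZMod 2) S with hW
  haveI : Fintype W := Fintype.ofFinite W
  have hWlt : Module.finrank (ZMod 2) W < r := by
    have := Submodule.finrank_lt (K := ZMod 2) (V := Fin r → ZMod 2) hspan
    rwa [hfinV] at this
  have hcardW : Nat.card W = 2 ^ Module.finrank (ZMod 2) W := by
    rw [Nat.card_eq_fintype_card]
    have := Module.card_eq_pow_finrank (K := ZMod 2) (V := W)
    simpa using this
  have hSsub : S ⊆ (W : Set (Fin r → ZMod 2)) := Submodule.subset_span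
  have hSncard : S.ncard ≤ 2 ^ (r - 1) := by
    calc S.ncard ≤ (W : Set (Fin r → ZMod 2)).ncard := Set.ncard_le_ncard hSsub (Set.toFinite _)
    _ = Nat.card W := (Nat.card_coe_set_eq _).symm
    _ = 2 ^ Module.finrank (ZMod 2) W := hcardW
    _ ≤ 2 ^ (r - 1) := Nat.pow_le_pow_right (by norm_num) (by omega)
  have htotal : A.ncard + S.ncard = 2 ^ r := by
    rw [hS, Set.ncard_add_ncard_compl]
    simp [Nat.card_eq_fintype_card, Fintype.card_fun]
  have h2r : 2 ^ (r - 1) + 2 ^ (r - 1) = 2 ^ r := by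
    rw [← two_mul, ← pow_succ']
    congr 1
    omega
  omega
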